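/- Let J be a finite set of natural numbers, let k ∈ J and let l ∉ J with k ≠ l. Then ε(l, J) · ε(k, (J \ {k}) ∪ {l}) = − ε(l, J \ {k}) · ε(k, J \ {k}). -/

import Mathlib

/-- The insertion sign `ε(m, K) = (−1)^{#{k ∈ K : k < m}}`: the sign of the permutation
sorting the multi-index obtained by prepending `m` to the increasing enumeration of `K`. -/
def insertionSign (m : ℕ) (K : Finset ℕ) : ℤ :=
  (-1) ^ (K.filter (fun k => k < m)).card

/-- For `k ∈ J`, `l ∉ J`, `k ≠ l`:
`ε(l, J) · ε(k, (J \ {k}) ∪ {l}) = − ε(l, J \ {k}) · ε(k, J \ {k})`. -/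
theorem insertionSign_relation (J : Finset ℕ) (k l : ℕ)
    (hk : k ∈ J) (hl : l ∉ J) (hkl : k ≠ l) :
    insertionSign l J * insertionSign k ((J \ {k}) ∪ {l}) =
      - (insertionSign l (J \ {k}) * insertionSign k (J \ {k})) := by
  unfold insertionSign
  rcases hkl.lt_or_gt with h | h
  · -- k < l
    have h1 : J.filter (fun x => x < l) = insert k ((J \ {k}).filter (fun x => x < l)) := by
      ext x
      simp only [Finset.mem_filter, Finset.mem_insert, Finset.mem_sdiff,
        Finset.mem_singleton]
      constructor
      · rintro ⟨hx, hxl⟩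
        by_cases hxk : x = k
        · exact Or.inl hxk
        · exact Or.inr ⟨⟨hx, hxk⟩, hxl⟩
      · rintro (rfl | ⟨⟨hx, _⟩, hxl⟩)
        · exact ⟨hk, h⟩
        · exact ⟨hx, hxl⟩
    have h2 : ((J \ {k}) ∪ {l}).filter (fun x => x < k) =
        (J \ {k}).filter (fun x => x < k) := by
      rw [Finset.filter_union, Finset.filter_singleton, if_neg (by omega)]
      exact Finset.union_empty _
    have hknot : k ∉ (J \ {k}).filter (fun x => x < l) := by
      simp
    rw [h1, h2, Finset.card_insert_of_notMem hknot, pow_succ]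
    ring
  · -- l < k
    have h1 : J.filter (fun x => x < l) = (J \ {k}).filter (fun x => x < l) := by
      ext x
      simp only [Finset.mem_filter, Finset.mem_sdiff, Finset.mem_singleton]
      constructor
      · rintro ⟨hx, hxl⟩
        exact ⟨⟨hx, by omega⟩, hxl⟩
      · rintro ⟨⟨hx, _⟩, hxl⟩
        exact ⟨hx, hxl⟩
    have h2 : ((J \ {k}) ∪ {l}).filter (fun x => x < k) =
        insert l ((J \ {k}).filter (fun x => x < k)) := by
      rw [Finset.filter_union, Finset.filter_singleton, if_pos h]
      rw [Finset.union_comm]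
      exact (Finset.insert_eq l _).symm
    have hlnot : l ∉ (J \ {k}).filter (fun x => x < k) := by
      simp only [Finset.mem_filter, Finset.mem_sdiff, Finset.mem_singleton]
      rintro ⟨⟨hlJ, _⟩, _⟩
      exact hl hlJ
    rw [h1, h2, Finset.card_insert_of_notMem hlnot, pow_succ]
    ring
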